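/- arXiv:2008.10262 — 2 statements merged into one kernel-verified Lean document; each statement's English description precedes it below -/
import Mathlib

section
/- Let a ∈ ℝ, let K : (a,∞) → ℝ be positive and integrable on (a,∞), and let f, g : [a,∞) → ℝ be continuous, bounded and nonnegative. If f(t) ≤ g(t) + ∫_t^∞ K(s) f(s) ds for all t ≥ a, then f(t) ≤ g(t) + ∫_t^∞ K(s) exp(∫_t^s K(u) du) g(s) ds for all t ≥ a. -/
open MeasureTheory Set Real

lemma gronwall_key {K : ℝ → ℝ} (hK : Measurable K) (hKnn : ∀ s, 0 ≤ K s)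
    {t u : ℝ} (htu : t ≤ u) (hKint : IntegrableOn K (Ioc t u)) {c : ℝ} (hc : c ≠ 0) :
    ∫ s in Ioc t u, K s * rexp (c * ∫ x in Ioc t s, K x)
      = (rexp (c * ∫ x in Ioc t u, K x) - 1) / c := by
  set K' : ℝ → ℝ := (Ioc t u).indicator K with hK'def
  have hK'meas : Measurable K' := hK.indicator measurableSet_Ioc
  have hK'nn : ∀ s, 0 ≤ K' s := fun s => Set.indicator_nonneg (fun x _ => hKnn x) s
  have hK'int : Integrable K' := (integrable_indicator_iff measurableSet_Ioc).mpr hKint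
  set F : ℝ → ℝ := fun s => ∫ x in t..s, K' x with hFdef
  have hFcont : Continuous F :=
    intervalIntegral.continuous_primitive (fun a b => hK'int.intervalIntegrable) t
  have hadd : ∀ s₁ s₂ : ℝ, F s₂ = F s₁ + ∫ x in s₁..s₂, K' x := by
    intro s₁ s₂
    show (∫ x in t..s₂, K' x) = (∫ x in t..s₁, K' x) + ∫ x in s₁..s₂, K' x
    rw [intervalIntegral.integral_add_adjacent_intervals hK'int.intervalIntegrable
      hK'int.intervalIntegrable]
  have hFmono : Monotone F := by
    intro s₁ s₂ h
    have h2 : 0 ≤ ∫ x in s₁..s₂, K' x :=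
      intervalIntegral.integral_nonneg h (fun x _ => hK'nn x)
    have := hadd s₁ s₂
    linarith
  have hFt : F t = 0 := intervalIntegral.integral_same
  have hFeq : ∀ s, t ≤ s → s ≤ u → F s = ∫ x in Ioc t s, K x := by
    intro s hts hsu
    show (∫ x in t..s, K' x) = _
    rw [intervalIntegral.integral_of_le hts, hK'def,
      setIntegral_indicator measurableSet_Ioc]
    rw [Set.inter_eq_left.mpr (Ioc_subset_Ioc_right hsu)]
  have hFconst : ∀ s, u ≤ s → F s = F u := by
    intro s hus
    have h0 : (∫ x in u..s, K' x) = 0 := by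
      rw [intervalIntegral.integral_of_le hus]
      apply setIntegral_eq_zero_of_forall_eq_zero
      intro x hx
      exact Set.indicator_of_notMem (fun hmem => absurd hmem.2 (not_le.mpr hx.1)) K
    have := hadd u s
    linarith
  have hFnn : ∀ s, 0 ≤ F s := by
    intro s
    rcases le_or_gt t s with h | h
    · rw [← hFt]; exact hFmono h
    · have h0 : (∫ x in t..s, K' x) = 0 := by
        rw [intervalIntegral.integral_symm, intervalIntegral.integral_of_le h.le,
          neg_eq_zero]
        apply setIntegral_eq_zero_of_forall_eq_zero
        intro x hx
        exact Set.indicator_of_notMem (fun hmem => absurd hx.2 (not_le.mpr hmem.1)) K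
      have := hadd t s
      rw [hFt] at this; linarith
  have hFle : ∀ s, F s ≤ F u := by
    intro s
    rcases le_or_gt s u with h | h
    · exact hFmono h
    · exact (hFconst s h.le).le
  -- the measure
  set μ : Measure ℝ := volume.withDensity (fun s => ENNReal.ofReal (K' s)) with hμdef
  have hμapp : ∀ {E : Set ℝ}, MeasurableSet E → IntegrableOn K' E →
      μ E = ENNReal.ofReal (∫ x in E, K' x) := by
    intro E hE hint
    rw [hμdef, withDensity_apply _ hE,
      ← ofReal_integral_eq_lintegral_ofReal hint
        (Filter.Eventually.of_forall (fun x => hK'nn x))]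
  have hμuniv : μ Set.univ = ENNReal.ofReal (F u) := by
    rw [hμapp MeasurableSet.univ (integrableOn_univ.mpr hK'int)]
    congr 1
    rw [setIntegral_univ, hFeq u htu le_rfl, hK'def, integral_indicator measurableSet_Ioc]
  have hμfin : IsFiniteMeasure μ := by
    constructor; rw [hμuniv]; exact ENNReal.ofReal_lt_top
  have hFmeas : Measurable F := hFcont.measurable
  have hmap : μ.map F = volume.restrict (Ioc 0 (F u)) := by
    haveI := hμfin
    haveI : IsFiniteMeasure (μ.map F) := μ.isFiniteMeasure_map F
    refine Measure.ext_of_Iic _ _ (fun y => ?_)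
    rw [Measure.map_apply hFmeas measurableSet_Iic, Measure.restrict_apply measurableSet_Iic]
    rcases lt_or_ge y 0 with hy | hy
    · have h1 : F ⁻¹' Iic y = ∅ := by
        refine eq_empty_iff_forall_notMem.mpr (fun s hs => ?_)
        exact ((hFnn s).not_gt (lt_of_le_of_lt hs hy))
      have h2 : Iic y ∩ Ioc 0 (F u) = ∅ := by
        refine eq_empty_iff_forall_notMem.mpr (fun x hx => ?_)
        have := hx.1; have := hx.2.1; simp only [mem_Iic] at *; linarith
      rw [h1, h2]; simp
    rcases le_or_gt (F u) y with hy2 | hy2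
    · have h1 : F ⁻¹' Iic y = univ :=
        eq_univ_of_forall (fun s => le_trans (hFle s) hy2)
      have h2 : Iic y ∩ Ioc 0 (F u) = Ioc 0 (F u) :=
        inter_eq_right.mpr (fun x hx => le_trans hx.2 hy2)
      rw [h1, h2, hμuniv, Real.volume_Ioc, sub_zero]
    · -- 0 ≤ y < F u
      set E := F ⁻¹' Iic y with hEdef
      have hEne : E.Nonempty := ⟨t, by simp only [hEdef, mem_preimage, mem_Iic, hFt]; exact hy⟩
      have hEbdd : BddAbove E := by
        refine ⟨u, fun s hs => ?_⟩
        by_contra hsu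
        push_neg at hsu
        have : F s = F u := hFconst s hsu.le
        have : F u ≤ y := by rw [← this]; exact hs
        exact absurd this (not_le.mpr hy2)
      set σ := sSup E with hσdef
      have hEclosed : IsClosed E := IsClosed.preimage hFcont isClosed_Iic
      have hσE : σ ∈ E := hEclosed.csSup_mem hEne hEbdd
      have htσ : t ≤ σ := le_csSup hEbdd (by simp only [hEdef, mem_preimage, mem_Iic, hFt]; exact hy)
      have hEIic : E = Iic σ := by
        refine subset_antisymm (fun s hs => le_csSup hEbdd hs) (fun s hs => ?_)
        exact le_trans (hFmono hs) hσE
      have hFσ : F σ = y := by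
        refine le_antisymm hσE ?_
        obtain ⟨s₀, hs₀mem, hs₀⟩ := intermediate_value_Icc htu hFcont.continuousOn
          (by rw [hFt]; exact ⟨hy, hy2.le⟩)
        have : s₀ ≤ σ := le_csSup hEbdd (by simp [hEdef, hs₀])
        rw [← hs₀]; exact hFmono this
      have hIic0 : ∫ x in Iic t, K' x = 0 := by
        apply setIntegral_eq_zero_of_forall_eq_zero
        intro x hx
        exact Set.indicator_of_notMem (fun hmem => absurd hx (not_le.mpr hmem.1)) K
      have hsplit : ∫ x in Iic σ, K' x = F σ := by
        rw [← Set.Iic_union_Ioc_eq_Iic htσ,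
          setIntegral_union (Set.Iic_disjoint_Ioc le_rfl) measurableSet_Ioc
            hK'int.integrableOn hK'int.integrableOn, hIic0, zero_add]
        rw [show F σ = ∫ x in t..σ, K' x from rfl, intervalIntegral.integral_of_le htσ]
      rw [hEIic, hμapp measurableSet_Iic hK'int.integrableOn, hsplit, hFσ]
      rw [Set.inter_comm, Set.Ioc_inter_Iic, min_eq_right hy2.le, Real.volume_Ioc, sub_zero]
  have h1 : ∫ s in Ioc t u, K s * rexp (c * ∫ x in Ioc t s, K x)
      = ∫ s in Ioc t u, K s * rexp (c * F s) := by
    refine setIntegral_congr_fun measurableSet_Ioc (fun s hs => ?_)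
    rw [hFeq s hs.1.le hs.2]
  have h2 : ∫ s in Ioc t u, K s * rexp (c * F s) = ∫ s, K' s * rexp (c * F s) := by
    rw [← integral_indicator measurableSet_Ioc]
    congr 1
    funext x
    by_cases hx : x ∈ Ioc t u
    · rw [Set.indicator_of_mem hx, hK'def, Set.indicator_of_mem hx]
    · rw [Set.indicator_of_notMem hx, hK'def, Set.indicator_of_notMem hx, zero_mul]
  have h3 : ∫ s, rexp (c * F s) ∂μ = ∫ s, K' s * rexp (c * F s) := by
    rw [hμdef]
    have hψ : (fun s => ENNReal.ofReal (K' s))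
        = fun s => (((fun x : ℝ => Real.toNNReal (K' x)) s : NNReal) : ENNReal) := rfl
    rw [hψ, integral_withDensity_eq_integral_smul (hK'meas.real_toNNReal)]
    congr 1; funext s
    rw [NNReal.smul_def, Real.coe_toNNReal _ (hK'nn s), smul_eq_mul]
  have h4 : ∫ y, rexp (c * y) ∂(μ.map F) = ∫ s, rexp (c * F s) ∂μ :=
    integral_map hFmeas.aemeasurable
      ((Real.continuous_exp.comp (continuous_const.mul continuous_id)).aestronglyMeasurable)
  have h5 : ∫ y, rexp (c * y) ∂(μ.map F) = ∫ y in (0:ℝ)..(F u), rexp (c * y) := by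
    rw [hmap, intervalIntegral.integral_of_le (hFnn u)]
  have h6 : ∫ y in (0:ℝ)..(F u), rexp (c * y) = (rexp (c * F u) - 1) / c := by
    have D : ∀ x : ℝ, HasDerivAt (fun y : ℝ => rexp (c * y) / c) (rexp (c * x)) x := by
      intro x
      have h := (((Real.hasDerivAt_exp (c * x)).comp x
        ((hasDerivAt_id x).const_mul c))).div_const c
      simp only [mul_one] at h
      rw [mul_div_assoc, div_self hc, mul_one] at h
      exact h
    rw [intervalIntegral.integral_eq_sub_of_hasDerivAt (fun x _ => D x)
      ((Real.continuous_exp.comp (continuous_const.mul continuous_id)).intervalIntegrable 0 (F u))]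
    rw [mul_zero, Real.exp_zero]
    ring
  rw [h1, h2, ← h3, ← h4, h5, h6, hFeq u htu le_rfl]

theorem gronwall_aux (a : ℝ) (K f g : ℝ → ℝ)
    (hK : Measurable K) (hKpos : ∀ s, 0 < K s)
    (hKint : IntegrableOn K (Ioi a))
    (hfcont : Continuous f) (Mf : ℝ) (hfbdd : ∀ t ∈ Ici a, f t ≤ Mf)
    (hfnn : ∀ t ∈ Ici a, 0 ≤ f t)
    (hgcont : Continuous g) (Mg : ℝ) (hgbdd : ∀ t ∈ Ici a, g t ≤ Mg)
    (hgnn : ∀ t ∈ Ici a, 0 ≤ g t)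
    (hineq : ∀ t, a ≤ t → f t ≤ g t + ∫ s in Ioi t, K s * f s) :
    ∀ t, a ≤ t →
      f t ≤ g t + ∫ s in Ioi t, K s * rexp (∫ u in Ioc t s, K u) * g s := by
  have hKnn : ∀ s, 0 ≤ K s := fun s => (hKpos s).le
  set C : ℝ := ∫ x in Ioi a, K x with hCdef
  set P : ℝ → ℝ := fun s => ∫ x in Ioc a s, K x with hPdef
  have hKsub : ∀ {E : Set ℝ}, E ⊆ Ioi a → IntegrableOn K E := fun hE => hKint.mono_set hE
  have hPnn : ∀ s, 0 ≤ P s := fun s =>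
    setIntegral_nonneg measurableSet_Ioc (fun x _ => hKnn x)
  have hPC : ∀ s, P s ≤ C := by
    intro s
    exact setIntegral_mono_set hKint (.of_forall (fun x => hKnn x))
      (HasSubset.Subset.eventuallyLE Ioc_subset_Ioi_self)
  have Pmono : Monotone P := by
    intro s₁ s₂ h
    exact setIntegral_mono_set (hKsub Ioc_subset_Ioi_self)
      (.of_forall (fun x => hKnn x))
      (HasSubset.Subset.eventuallyLE (Ioc_subset_Ioc_right h))
  have Pmeas : Measurable P := Pmono.measurable
  have hPadd : ∀ {t s : ℝ}, a ≤ t → t ≤ s → P s = P t + ∫ x in Ioc t s, K x := by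
    intro t s hat hts
    rw [hPdef]
    simp only
    rw [← Ioc_union_Ioc_eq_Ioc hat hts,
      setIntegral_union (Ioc_disjoint_Ioc_of_le le_rfl) measurableSet_Ioc
        (hKsub Ioc_subset_Ioi_self) (hKsub (Ioc_subset_Ioi_self.trans (Ioi_subset_Ioi hat)))]
  have keyc : ∀ {c : ℝ}, c ≠ 0 → ∀ {t u : ℝ}, a ≤ t → t ≤ u →
      ∫ s in Ioc t u, K s * rexp (c * P s)
        = (rexp (c * P u) - rexp (c * P t)) / c := by
    intro c hc t u hat htu
    have h1 : ∫ s in Ioc t u, K s * rexp (c * P s)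
        = ∫ s in Ioc t u, rexp (c * P t) * (K s * rexp (c * ∫ x in Ioc t s, K x)) := by
      refine setIntegral_congr_fun measurableSet_Ioc (fun s hs => ?_)
      rw [hPadd hat hs.1.le, mul_add, Real.exp_add]
      ring
    rw [h1, integral_const_mul,
      gronwall_key hK hKnn htu (hKsub (Ioc_subset_Ioi_self.trans (Ioi_subset_Ioi hat))) hc]
    have h2 : P u = P t + ∫ x in Ioc t u, K x := hPadd hat htu
    have h3 : (∫ x in Ioc t u, K x) = P u - P t := by linarith
    rw [h3, show c * (P u - P t) = c * P u - c * P t by ring, Real.exp_sub]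
    have h4 : rexp (c * P t) ≠ 0 := (Real.exp_pos _).ne'
    field_simp
  -- generic integrability
  have hbint : ∀ (h : ℝ → ℝ) (B : ℝ), Measurable h → (∀ s ∈ Ioi a, |h s| ≤ B) →
      ∀ {t : ℝ}, a ≤ t → IntegrableOn (fun s => K s * h s) (Ioi t) := by
    intro h B hmeas hbd t hat
    refine Integrable.mono' ((hKsub (Ioi_subset_Ioi hat)).const_mul B)
      ((hK.mul hmeas).aestronglyMeasurable) ?_
    refine (ae_restrict_iff' measurableSet_Ioi).mpr (.of_forall fun s hs => ?_)
    have hsa : s ∈ Ioi a := lt_of_le_of_lt hat hs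
    calc ‖K s * h s‖ = K s * |h s| := by
          rw [norm_eq_abs, abs_mul, abs_of_nonneg (hKnn s)]
      _ ≤ K s * B := mul_le_mul_of_nonneg_left (hbd s hsa) (hKnn s)
      _ = B * K s := mul_comm _ _
  have hMg0 : 0 ≤ Mg := le_trans (hgnn a self_mem_Ici) (hgbdd a self_mem_Ici)
  have hMf0 : 0 ≤ Mf := le_trans (hfnn a self_mem_Ici) (hfbdd a self_mem_Ici)
  have hC0 : 0 ≤ C := setIntegral_nonneg measurableSet_Ioi (fun x _ => hKnn x)
  -- the weighted g integrand
  have hegmeas : Measurable (fun u => rexp (P u) * g u) :=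
    (Real.measurable_exp.comp Pmeas).mul hgcont.measurable
  have hegbd : ∀ u ∈ Ioi a, |rexp (P u) * g u| ≤ rexp C * Mg := by
    intro u hu
    rw [abs_of_nonneg (mul_nonneg (Real.exp_nonneg _) (hgnn u (mem_Ici.mpr (le_of_lt (mem_Ioi.mp hu)))))]
    exact mul_le_mul (Real.exp_le_exp.mpr (hPC u)) (hgbdd u (mem_Ici.mpr (le_of_lt (mem_Ioi.mp hu))))
      (hgnn u (mem_Ici.mpr (le_of_lt (mem_Ioi.mp hu)))) (Real.exp_nonneg _)
  have hgbd' : ∀ u ∈ Ioi a, |g u| ≤ Mg := fun u hu => by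
    rw [abs_of_nonneg (hgnn u (mem_Ici.mpr (le_of_lt (mem_Ioi.mp hu))))]; exact hgbdd u (mem_Ici.mpr (le_of_lt (mem_Ioi.mp hu)))
  have hfbd' : ∀ u ∈ Ioi a, |f u| ≤ Mf := fun u hu => by
    rw [abs_of_nonneg (hfnn u (mem_Ici.mpr (le_of_lt (mem_Ioi.mp hu))))]; exact hfbdd u (mem_Ici.mpr (le_of_lt (mem_Ioi.mp hu)))
  set W : ℝ → ℝ := fun s => ∫ u in Ioi (max s a), K u * (rexp (P u) * g u) with hWdef
  set R : ℝ → ℝ := fun s => ∫ u in Ioi (max s a), K u * f u with hRdef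
  have hWs : ∀ {s : ℝ}, a ≤ s → W s = ∫ u in Ioi s, K u * (rexp (P u) * g u) := by
    intro s hs; rw [hWdef]; simp only [max_eq_left hs]
  have hRs : ∀ {s : ℝ}, a ≤ s → R s = ∫ u in Ioi s, K u * f u := by
    intro s hs; rw [hRdef]; simp only [max_eq_left hs]
  have hKegnn : ∀ {m : ℝ}, a ≤ m →
      0 ≤ᵐ[volume.restrict (Ioi m)] fun u => K u * (rexp (P u) * g u) := by
    intro m hm
    refine (ae_restrict_iff' measurableSet_Ioi).mpr (.of_forall fun u hu => ?_)
    exact mul_nonneg (hKnn u) (mul_nonneg (Real.exp_nonneg _)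
      (hgnn u (hm.trans (le_of_lt hu))))
  have hKfnn : ∀ {m : ℝ}, a ≤ m →
      0 ≤ᵐ[volume.restrict (Ioi m)] fun u => K u * f u := by
    intro m hm
    refine (ae_restrict_iff' measurableSet_Ioi).mpr (.of_forall fun u hu => ?_)
    exact mul_nonneg (hKnn u) (hfnn u (hm.trans (le_of_lt hu)))
  have Wanti : Antitone W := by
    intro s₁ s₂ h
    exact setIntegral_mono_set
      (hbint _ _ hegmeas hegbd (le_max_right s₁ a))
      (hKegnn (le_max_right s₁ a))
      (HasSubset.Subset.eventuallyLE (Ioi_subset_Ioi (max_le_max h le_rfl)))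
  have Ranti : Antitone R := by
    intro s₁ s₂ h
    exact setIntegral_mono_set
      (hbint _ _ hfcont.measurable hfbd' (le_max_right s₁ a))
      (hKfnn (le_max_right s₁ a))
      (HasSubset.Subset.eventuallyLE (Ioi_subset_Ioi (max_le_max h le_rfl)))
  have Wmeas : Measurable W := Wanti.measurable
  have Rmeas : Measurable R := Ranti.measurable
  have Wnn : ∀ s, 0 ≤ W s := fun s =>
    integral_nonneg_of_ae (hKegnn (le_max_right s a))
  have Rnn : ∀ s, 0 ≤ R s := fun s =>
    integral_nonneg_of_ae (hKfnn (le_max_right s a))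
  -- generic bound for such integrals
  have hintbd : ∀ (h : ℝ → ℝ) (B : ℝ), 0 ≤ B → Measurable h → (∀ s ∈ Ioi a, |h s| ≤ B) →
      ∀ {m : ℝ}, a ≤ m → (∫ u in Ioi m, K u * h u) ≤ B * C := by
    intro h B hB hmeas hbd m hm
    have h1 : (∫ u in Ioi m, K u * h u) ≤ ∫ u in Ioi m, B * K u := by
      refine integral_mono_ae (hbint _ _ hmeas hbd hm)
        ((hKsub (Ioi_subset_Ioi hm)).const_mul B) ?_
      refine (ae_restrict_iff' measurableSet_Ioi).mpr (.of_forall fun u hu => ?_)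
      have hua : u ∈ Ioi a := lt_of_le_of_lt hm hu
      calc K u * h u ≤ K u * |h u| :=
            mul_le_mul_of_nonneg_left (le_abs_self _) (hKnn u)
        _ ≤ K u * B := mul_le_mul_of_nonneg_left (hbd u hua) (hKnn u)
        _ = B * K u := mul_comm _ _
    have h2 : (∫ u in Ioi m, B * K u) = B * ∫ u in Ioi m, K u := integral_const_mul _ _
    have h3 : (∫ u in Ioi m, K u) ≤ C :=
      setIntegral_mono_set hKint (.of_forall (fun x => hKnn x))
        (HasSubset.Subset.eventuallyLE (Ioi_subset_Ioi hm))
    calc (∫ u in Ioi m, K u * h u) ≤ B * ∫ u in Ioi m, K u := by rw [← h2]; exact h1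
      _ ≤ B * C := mul_le_mul_of_nonneg_left h3 hB
  have Wbd : ∀ s, W s ≤ rexp C * Mg * C := fun s =>
    hintbd _ _ (mul_nonneg (Real.exp_nonneg _) hMg0) hegmeas hegbd (le_max_right s a)
  have Rbd : ∀ s, R s ≤ Mf * C := fun s =>
    hintbd _ _ hMf0 hfcont.measurable hfbd' (le_max_right s a)
  set S : ℝ → ℝ := fun s => rexp (-P s) * W s with hSdef
  have Snn : ∀ s, 0 ≤ S s := fun s => mul_nonneg (Real.exp_nonneg _) (Wnn s)
  have Smeas : Measurable S :=
    (Real.measurable_exp.comp Pmeas.neg).mul Wmeas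
  have Sbd : ∀ s, |S s| ≤ rexp C * Mg * C := by
    intro s
    rw [hSdef, abs_of_nonneg (Snn s)]
    calc rexp (-P s) * W s ≤ 1 * W s :=
          mul_le_mul_of_nonneg_right
            (Real.exp_le_one_iff.mpr (neg_nonpos.mpr (hPnn s))) (Wnn s)
      _ = W s := one_mul _
      _ ≤ rexp C * Mg * C := Wbd s
  have hfR : ∀ s, a ≤ s → f s ≤ g s + R s := by
    intro s hs
    rw [hRs hs]
    exact hineq s hs
  have hgoal : ∀ t, a ≤ t →
      (∫ s in Ioi t, K s * rexp (∫ u in Ioc t s, K u) * g s) = S t := by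
    intro t ht
    have h1 : EqOn (fun s => K s * rexp (∫ u in Ioc t s, K u) * g s)
        (fun s => rexp (-P t) * (K s * (rexp (P s) * g s))) (Ioi t) := by
      intro s hs
      have h2 : (∫ u in Ioc t s, K u) = P s - P t := by
        have := hPadd ht (le_of_lt hs); linarith
      simp only [h2, Real.exp_sub, Real.exp_neg]
      have := (Real.exp_pos (P t)).ne'
      field_simp
    rw [setIntegral_congr_fun measurableSet_Ioi h1, integral_const_mul, hSdef]
    simp only
    rw [hWs ht]
  have hRabs : ∀ s ∈ Ioi a, |R s| ≤ Mf * C := fun s _ => by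
    rw [abs_of_nonneg (Rnn s)]; exact Rbd s
  have hRstep : ∀ t, a ≤ t →
      R t ≤ (∫ s in Ioi t, K s * g s) + ∫ s in Ioi t, K s * R s := by
    intro t ht
    have hint1 := hbint f Mf hfcont.measurable hfbd' ht
    have hint2 := hbint g Mg hgcont.measurable hgbd' ht
    have hint3 := hbint R (Mf * C) Rmeas hRabs ht
    rw [hRs ht, ← integral_add hint2 hint3]
    refine integral_mono_ae hint1 (hint2.add hint3) ?_
    refine (ae_restrict_iff' measurableSet_Ioi).mpr (.of_forall fun s hs => ?_)
    have hsa : a ≤ s := ht.trans (le_of_lt hs)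
    have := hfR s hsa
    have hKs := hKnn s
    calc K s * f s ≤ K s * (g s + R s) := mul_le_mul_of_nonneg_left this hKs
      _ = K s * g s + K s * R s := by ring
  have hV : ∀ t, a ≤ t →
      (∫ s in Ioi t, K s * rexp (-2 * P s)) ≤ rexp (-2 * P t) / 2 := by
    intro t ht
    have hmeasv : Measurable (fun s => rexp (-2 * P s)) :=
      Real.measurable_exp.comp (Pmeas.const_mul (-2))
    have hbdv : ∀ s ∈ Ioi a, |rexp (-2 * P s)| ≤ 1 := by
      intro s hs
      rw [abs_of_nonneg (Real.exp_nonneg _)]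
      refine Real.exp_le_one_iff.mpr ?_
      have := hPnn s; nlinarith
    have hintv := hbint _ 1 hmeasv hbdv ht
    have tends := intervalIntegral_tendsto_integral_Ioi t hintv Filter.tendsto_id
    refine le_of_tendsto tends ?_
    filter_upwards [Filter.eventually_ge_atTop t] with u hu
    show (∫ s in t..u, K s * rexp (-2 * P s)) ≤ _
    rw [intervalIntegral.integral_of_le hu, keyc (by norm_num) ht hu]
    have := Real.exp_nonneg (-2 * P u)
    linarith
  have hres : ∀ t, a ≤ t →
      (∫ s in Ioi t, K s * S s) = S t - ∫ s in Ioi t, K s * g s := by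
    intro t ht
    set ν := volume.restrict (Ioi t) with hνdef
    set A2 : ℝ × ℝ → ℝ := fun p =>
      {q : ℝ × ℝ | q.1 < q.2}.indicator
        (fun q => (K q.1 * rexp (-P q.1)) * (K q.2 * (rexp (P q.2) * g q.2))) p with hA2def
    have hA2meas : Measurable A2 := by
      refine Measurable.indicator ?_ (measurableSet_lt measurable_fst measurable_snd)
      exact ((hK.comp measurable_fst).mul
        (Real.measurable_exp.comp ((Pmeas.comp measurable_fst).neg))).mul
        ((hK.comp measurable_snd).mul
          ((Real.measurable_exp.comp (Pmeas.comp measurable_snd)).mul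
            (hgcont.measurable.comp measurable_snd)))
    have hA2int : Integrable A2 (ν.prod ν) := by
      refine Integrable.mono'
        (Integrable.mul_prod (μ := ν) (ν := ν) (f := K) (g := fun u => K u * (rexp C * Mg))
          (hKsub (Ioi_subset_Ioi ht)) ((hKsub (Ioi_subset_Ioi ht)).mul_const _))
        hA2meas.aestronglyMeasurable ?_
      rw [hνdef, Measure.prod_restrict]
      refine (ae_restrict_iff' (measurableSet_Ioi.prod measurableSet_Ioi)).mpr
        (.of_forall fun p hp => ?_)
      obtain ⟨hp1, hp2⟩ := hp
      by_cases hlt : p.1 < p.2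
      · simp only [hA2def]
        rw [Set.indicator_of_mem (by exact hlt)]
        have hu : p.2 ∈ Ioi a := lt_of_le_of_lt ht hp2
        rw [norm_eq_abs, abs_mul]
        have e1 : |K p.1 * rexp (-P p.1)| ≤ K p.1 := by
          rw [abs_of_nonneg (mul_nonneg (hKnn _) (Real.exp_nonneg _))]
          calc K p.1 * rexp (-P p.1) ≤ K p.1 * 1 :=
                mul_le_mul_of_nonneg_left
                  (Real.exp_le_one_iff.mpr (neg_nonpos.mpr (hPnn _))) (hKnn _)
            _ = K p.1 := mul_one _
        have e2 : |K p.2 * (rexp (P p.2) * g p.2)| ≤ K p.2 * (rexp C * Mg) := by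
          rw [abs_mul, abs_of_nonneg (hKnn _)]
          exact mul_le_mul_of_nonneg_left (hegbd p.2 hu) (hKnn _)
        exact mul_le_mul e1 e2 (abs_nonneg _) (hKnn _)
      · simp only [hA2def]
        rw [Set.indicator_of_notMem (by exact hlt), norm_zero]
        exact mul_nonneg (hKnn _) (mul_nonneg (hKnn _)
          (mul_nonneg (Real.exp_nonneg _) hMg0))
    have huncurry : Function.uncurry (fun s u => A2 (s, u)) = A2 := rfl
    have hswap : ∫ s, (∫ u, A2 (s, u) ∂ν) ∂ν = ∫ u, (∫ s, A2 (s, u) ∂ν) ∂ν := by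
      refine integral_integral_swap ?_
      rw [huncurry]; exact hA2int
    have hL : ∫ s, (∫ u, A2 (s, u) ∂ν) ∂ν = ∫ s in Ioi t, K s * S s := by
      refine setIntegral_congr_fun measurableSet_Ioi (fun s hs => ?_)
      have hst : t < s := hs
      have h1 : (fun u => A2 (s, u)) = (Ioi s).indicator
          (fun u => (K s * rexp (-P s)) * (K u * (rexp (P u) * g u))) := by
        funext u
        by_cases h : s < u
        · simp only [hA2def]
          rw [Set.indicator_of_mem (by exact h), Set.indicator_of_mem (by exact h)]
        · simp only [hA2def]
          rw [Set.indicator_of_notMem (by exact h), Set.indicator_of_notMem (by exact h)]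
      rw [h1, integral_indicator measurableSet_Ioi,
        Measure.restrict_restrict measurableSet_Ioi, Set.Ioi_inter_Ioi,
        sup_eq_left.mpr hst.le, integral_const_mul, ← hWs (ht.trans hst.le)]
      simp only [hSdef]
      ring
    have hR2 : ∫ u, (∫ s, A2 (s, u) ∂ν) ∂ν
        = ∫ u in Ioi t, (rexp (-P t) - rexp (-P u)) * (K u * (rexp (P u) * g u)) := by
      refine setIntegral_congr_fun measurableSet_Ioi (fun u hu => ?_)
      have htu : t < u := hu
      have h1 : (fun s => A2 (s, u)) = (Iio u).indicator
          (fun s => (K s * rexp (-P s)) * (K u * (rexp (P u) * g u))) := by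
        funext s
        by_cases h : s < u
        · simp only [hA2def]
          rw [Set.indicator_of_mem (by exact h), Set.indicator_of_mem (by exact h)]
        · simp only [hA2def]
          rw [Set.indicator_of_notMem (by exact h), Set.indicator_of_notMem (by exact h)]
      have h2 : Iio u ∩ Ioi t = Ioo t u := by
        ext x; simp only [mem_inter_iff, mem_Iio, mem_Ioi, mem_Ioo]; tauto
      have h3 : (fun s => (K s * rexp (-P s)) * (K u * (rexp (P u) * g u)))
          = fun s => (K s * rexp (-P s)) * (K u * (rexp (P u) * g u)) := rfl
      rw [h1, integral_indicator measurableSet_Iio,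
        Measure.restrict_restrict measurableSet_Iio, h2, integral_mul_const]
      congr 1
      rw [← integral_Ioc_eq_integral_Ioo]
      calc ∫ s in Ioc t u, K s * rexp (-P s)
          = ∫ s in Ioc t u, K s * rexp (-1 * P s) := by
            refine setIntegral_congr_fun measurableSet_Ioc (fun s _ => ?_)
            norm_num
        _ = (rexp (-1 * P u) - rexp (-1 * P t)) / (-1) := keyc (by norm_num) ht htu.le
        _ = rexp (-P t) - rexp (-P u) := by simp only [neg_one_mul]; ring
    have hfin : ∫ u in Ioi t, (rexp (-P t) - rexp (-P u)) * (K u * (rexp (P u) * g u))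
        = S t - ∫ u in Ioi t, K u * g u := by
      have h1 : EqOn (fun u => (rexp (-P t) - rexp (-P u)) * (K u * (rexp (P u) * g u)))
          (fun u => rexp (-P t) * (K u * (rexp (P u) * g u)) - K u * g u) (Ioi t) := by
        intro u _
        simp only [Real.exp_neg]
        have h2 := (Real.exp_pos (P u)).ne'
        have h3 := (Real.exp_pos (P t)).ne'
        field_simp
      rw [setIntegral_congr_fun measurableSet_Ioi h1,
        integral_sub ((hbint _ _ hegmeas hegbd ht).const_mul _)
          (hbint g Mg hgcont.measurable hgbd' ht),
        integral_const_mul, hSdef]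
      simp only
      rw [hWs ht]
    calc (∫ s in Ioi t, K s * S s) = ∫ s, (∫ u, A2 (s, u) ∂ν) ∂ν := hL.symm
      _ = ∫ u, (∫ s, A2 (s, u) ∂ν) ∂ν := hswap
      _ = ∫ u in Ioi t, (rexp (-P t) - rexp (-P u)) * (K u * (rexp (P u) * g u)) := hR2
      _ = S t - ∫ u in Ioi t, K u * g u := hfin
  -- contraction
  have hmeasv : Measurable (fun s => rexp (-2 * P s)) :=
    Real.measurable_exp.comp (Pmeas.const_mul (-2))
  have hbdv : ∀ s ∈ Ioi a, |rexp (-2 * P s)| ≤ 1 := by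
    intro s _
    rw [abs_of_nonneg (Real.exp_nonneg _)]
    refine Real.exp_le_one_iff.mpr ?_
    have := hPnn s; nlinarith
  set Φ : ℝ → ℝ := fun s => (R s - S s) * rexp (2 * P s) with hΦdef
  have hΦne : (Φ '' Ici a).Nonempty := ⟨Φ a, ⟨a, self_mem_Ici, rfl⟩⟩
  have hΦbdd : BddAbove (Φ '' Ici a) := by
    refine ⟨Mf * C * rexp (2 * C), ?_⟩
    rintro x ⟨s, _, rfl⟩
    have h1 : R s - S s ≤ Mf * C := by have := Snn s; have := Rbd s; linarith
    calc Φ s ≤ (Mf * C) * rexp (2 * P s) :=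
          mul_le_mul_of_nonneg_right h1 (Real.exp_nonneg _)
      _ ≤ Mf * C * rexp (2 * C) :=
          mul_le_mul_of_nonneg_left
            (Real.exp_le_exp.mpr (by have := hPC s; linarith))
            (mul_nonneg hMf0 hC0)
  set A := sSup (Φ '' Ici a) with hAdef
  have hAle : ∀ s, a ≤ s → R s - S s ≤ A * rexp (-(2 * P s)) := by
    intro s hs
    have h1 : Φ s ≤ A := le_csSup hΦbdd ⟨s, hs, rfl⟩
    have h2 : R s - S s = Φ s * rexp (-(2 * P s)) := by
      simp only [hΦdef]
      rw [mul_assoc, ← Real.exp_add, add_neg_cancel, Real.exp_zero, mul_one]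
    rw [h2]
    exact mul_le_mul_of_nonneg_right h1 (Real.exp_nonneg _)
  have hSint : ∀ {t : ℝ}, a ≤ t → IntegrableOn (fun s => K s * S s) (Ioi t) :=
    fun ht => hbint S _ Smeas (fun s _ => Sbd s) ht
  have hRint : ∀ {t : ℝ}, a ≤ t → IntegrableOn (fun s => K s * R s) (Ioi t) :=
    fun ht => hbint R _ Rmeas hRabs ht
  have hVint : ∀ {t : ℝ}, a ≤ t →
      IntegrableOn (fun s => K s * rexp (-2 * P s)) (Ioi t) :=
    fun ht => hbint _ 1 hmeasv hbdv ht
  have hDle : ∀ t, a ≤ t → R t - S t ≤ A * ∫ s in Ioi t, K s * rexp (-2 * P s) := by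
    intro t ht
    have h1 : R t - S t ≤ ∫ s in Ioi t, (K s * R s - K s * S s) := by
      have h2 := hRstep t ht
      have h3 := hres t ht
      rw [integral_sub (hRint ht) (hSint ht)]
      linarith
    have h4 : (∫ s in Ioi t, (K s * R s - K s * S s))
        ≤ ∫ s in Ioi t, A * (K s * rexp (-2 * P s)) := by
      refine integral_mono_ae ((hRint ht).sub (hSint ht)) ((hVint ht).const_mul A) ?_
      refine (ae_restrict_iff' measurableSet_Ioi).mpr (.of_forall fun s hs => ?_)
      have hsa : a ≤ s := ht.trans (le_of_lt hs)
      have h5 := hAle s hsa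
      have h7 : K s * (R s - S s) ≤ K s * (A * rexp (-(2 * P s))) :=
        mul_le_mul_of_nonneg_left h5 (hKnn s)
      rw [show -(2 * P s) = -2 * P s by ring] at h7
      show K s * R s - K s * S s ≤ A * (K s * rexp (-2 * P s))
      nlinarith [h7]
    rw [integral_const_mul] at h4
    linarith
  have hVnn : ∀ t, a ≤ t → 0 ≤ ∫ s in Ioi t, K s * rexp (-2 * P s) := fun t _ =>
    setIntegral_nonneg measurableSet_Ioi
      (fun s _ => mul_nonneg (hKnn s) (Real.exp_nonneg _))
  have hRS : ∀ t, a ≤ t → R t ≤ S t := by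
    rcases le_or_gt A 0 with hA | hA
    · intro t ht
      nlinarith [hDle t ht, hVnn t ht]
    · exfalso
      have hup : ∀ x ∈ Φ '' Ici a, x ≤ A / 2 := by
        rintro x ⟨s, hs, rfl⟩
        have h1 := hDle s hs
        have h2 := hV s hs
        have h3 : R s - S s ≤ A * (rexp (-2 * P s) / 2) :=
          le_trans h1 (mul_le_mul_of_nonneg_left h2 hA.le)
        have h4 : rexp (-2 * P s) * rexp (2 * P s) = 1 := by
          rw [← Real.exp_add]; ring_nf; exact Real.exp_zero
        calc Φ s ≤ (A * (rexp (-2 * P s) / 2)) * rexp (2 * P s) :=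
              mul_le_mul_of_nonneg_right h3 (Real.exp_nonneg _)
          _ = A / 2 * (rexp (-2 * P s) * rexp (2 * P s)) := by ring
          _ = A / 2 := by rw [h4, mul_one]
      have hle := csSup_le hΦne hup
      rw [← hAdef] at hle
      linarith
  intro t ht
  rw [hgoal t ht]
  have h1 := hfR t ht
  have h2 := hRS t ht
  linarith

/-- Gronwall's lemma on an unbounded interval. -/
theorem gronwall_unbounded (a : ℝ) (K f g : ℝ → ℝ)
    (hKpos : ∀ t ∈ Ioi a, 0 < K t)
    (hKint : IntegrableOn K (Ioi a))
    (hfcont : ContinuousOn f (Ici a)) (hfbdd : ∃ M, ∀ t ∈ Ici a, f t ≤ M)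
    (hfnn : ∀ t ∈ Ici a, 0 ≤ f t)
    (hgcont : ContinuousOn g (Ici a)) (hgbdd : ∃ M, ∀ t ∈ Ici a, g t ≤ M)
    (hgnn : ∀ t ∈ Ici a, 0 ≤ g t)
    (hineq : ∀ t, a ≤ t → f t ≤ g t + ∫ s in Ioi t, K s * f s) :
    ∀ t, a ≤ t →
      f t ≤ g t + ∫ s in Ioi t, K s * Real.exp (∫ u in Ioc t s, K u) * g s := by
  obtain ⟨Mf, hMf⟩ := hfbdd
  obtain ⟨Mg, hMg⟩ := hgbdd
  obtain ⟨K₀, hK₀meas, hK₀ae⟩ := hKint.aestronglyMeasurable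
  set K₁ : ℝ → ℝ := fun s => if 0 < K₀ s then K₀ s else 1 with hK₁def
  have hK₁meas : Measurable K₁ :=
    Measurable.ite (measurableSet_lt measurable_const hK₀meas.measurable)
      hK₀meas.measurable measurable_const
  have hK₁pos : ∀ s, 0 < K₁ s := by
    intro s; simp only [hK₁def]; split_ifs with h; exacts [h, one_pos]
  have hae : K₁ =ᵐ[volume.restrict (Ioi a)] K := by
    filter_upwards [hK₀ae, ae_restrict_mem measurableSet_Ioi] with s h1 h2
    have h3 : 0 < K₀ s := h1 ▸ hKpos s h2
    simp only [hK₁def]; rw [if_pos h3, ← h1]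
  have haesub : ∀ {E : Set ℝ}, E ⊆ Ioi a → K₁ =ᵐ[volume.restrict E] K :=
    fun hsub => ae_restrict_of_ae_restrict_of_subset hsub hae
  have hKint₁ : IntegrableOn K₁ (Ioi a) := hKint.congr hae.symm
  set f₁ : ℝ → ℝ := fun s => f (max s a) with hf₁def
  set g₁ : ℝ → ℝ := fun s => g (max s a) with hg₁def
  have hf₁cont : Continuous f₁ :=
    hfcont.comp_continuous (continuous_id.max continuous_const)
      (fun x => le_max_right x a)
  have hg₁cont : Continuous g₁ :=
    hgcont.comp_continuous (continuous_id.max continuous_const)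
      (fun x => le_max_right x a)
  have hf₁eq : ∀ {s : ℝ}, a ≤ s → f₁ s = f s := by
    intro s hs; simp only [hf₁def, max_eq_left hs]
  have hg₁eq : ∀ {s : ℝ}, a ≤ s → g₁ s = g s := by
    intro s hs; simp only [hg₁def, max_eq_left hs]
  have hineq₁ : ∀ t, a ≤ t → f₁ t ≤ g₁ t + ∫ s in Ioi t, K₁ s * f₁ s := by
    intro t ht
    have e3 : (∫ s in Ioi t, K₁ s * f₁ s) = ∫ s in Ioi t, K s * f s := by
      refine integral_congr_ae ?_
      filter_upwards [haesub (Ioi_subset_Ioi ht), ae_restrict_mem measurableSet_Ioi]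
        with s h1 h2
      rw [h1, hf₁eq (ht.trans (le_of_lt h2))]
    rw [hf₁eq ht, hg₁eq ht, e3]
    exact hineq t ht
  intro t ht
  have hconc := gronwall_aux a K₁ f₁ g₁ hK₁meas hK₁pos hKint₁ hf₁cont Mf
    (fun s hs => by rw [hf₁eq hs]; exact hMf s hs)
    (fun s hs => by rw [hf₁eq hs]; exact hfnn s hs)
    hg₁cont Mg
    (fun s hs => by rw [hg₁eq hs]; exact hMg s hs)
    (fun s hs => by rw [hg₁eq hs]; exact hgnn s hs)
    hineq₁ t ht
  have e4 : (∫ s in Ioi t, K₁ s * rexp (∫ u in Ioc t s, K₁ u) * g₁ s)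
      = ∫ s in Ioi t, K s * rexp (∫ u in Ioc t s, K u) * g s := by
    refine integral_congr_ae ?_
    filter_upwards [haesub (Ioi_subset_Ioi ht), ae_restrict_mem measurableSet_Ioi]
      with s h1 h2
    have h3 : (∫ u in Ioc t s, K₁ u) = ∫ u in Ioc t s, K u :=
      integral_congr_ae (haesub (fun x hx => lt_of_le_of_lt ht hx.1))
    rw [h1, h3, hg₁eq (ht.trans (le_of_lt h2))]
  rw [hf₁eq ht, hg₁eq ht, e4] at hconc
  exact hconc
end

section
/- Let F be continuous on the ray {z + r : r ≥ 0} ⊂ ℂ with ∫₀^∞ |F(z+r)| dr < ∞, and let w, W be continuous bounded functions on this ray both satisfying the integral equation u(z') = w₀(z') + ∫_{z'}^∞ sin(t − z') F(t) u(t) dt (integration along t = z' + r, r ≥ 0) for all z' on the ray, where w₀ is a fixed continuous function. Then w ≡ W on the ray. -/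
open MeasureTheory Set


lemma fv_int (f v : ℝ → ℝ) (M c : ℝ) (hc : 0 ≤ c)
    (hf : IntegrableOn f (Ioi 0)) (hf0 : ∀ r, 0 ≤ f r)
    (hv : ContinuousOn v (Ici 0)) (hv0 : ∀ r, 0 ≤ v r) (hvM : ∀ r, 0 ≤ r → v r ≤ M) :
    IntegrableOn (fun t => f t * v t) (Ioi c) := by
  have hfc : IntegrableOn f (Ioi c) := hf.mono_set (Ioi_subset_Ioi hc)
  refine (hfc.mul_const M).mono' ?_ ?_
  · exact (hfc.aestronglyMeasurable.mul
      ((hv.mono (Ioi_subset_Ici hc)).aestronglyMeasurable measurableSet_Ioi))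
  · filter_upwards [ae_restrict_mem measurableSet_Ioi] with t ht
    have h0t : (0:ℝ) ≤ t := le_of_lt (lt_of_le_of_lt hc ht)
    rw [Real.norm_eq_abs, abs_of_nonneg (mul_nonneg (hf0 t) (hv0 t))]
    exact mul_le_mul_of_nonneg_left (hvM t h0t) (hf0 t)

lemma sup_half (v : ℝ → ℝ) (M a : ℝ) (hv0 : ∀ r, 0 ≤ v r) (hvM : ∀ r, 0 ≤ r → v r ≤ M)
    (ha : 0 ≤ a)
    (h : ∀ r₀, a ≤ r₀ → v r₀ ≤ sSup (v '' Ici a) / 2) : ∀ r, a ≤ r → v r = 0 := by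
  set S := sSup (v '' Ici a) with hSdef
  have hbdd : BddAbove (v '' Ici a) := by
    refine ⟨M, ?_⟩; rintro x ⟨r, hr, rfl⟩; exact hvM r (le_trans ha hr)
  have hne : (v '' Ici a).Nonempty := ⟨v a, a, self_mem_Ici, rfl⟩
  have hS : S ≤ S / 2 := csSup_le hne (by rintro x ⟨r, hr, rfl⟩; exact h r hr)
  have hS0 : S ≤ 0 := by linarith
  intro r hr
  exact le_antisymm ((le_csSup hbdd ⟨r, hr, rfl⟩).trans hS0) (hv0 r)

lemma aux_vanish (f v : ℝ → ℝ) (M : ℝ)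
    (hf : IntegrableOn f (Ioi 0)) (hf0 : ∀ r, 0 ≤ f r) (hfcont : ContinuousOn f (Ici 0))
    (hv : ContinuousOn v (Ici 0)) (hv0 : ∀ r, 0 ≤ v r) (hvM : ∀ r, 0 ≤ r → v r ≤ M)
    (key : ∀ r₀, 0 ≤ r₀ → v r₀ ≤ ∫ t in Ioi r₀, f t * v t) :
    ∀ r, 0 ≤ r → v r = 0 := by
  have hf0ae : ∀ {c : ℝ}, 0 ≤ᵐ[volume.restrict (Ioi c)] f :=
    fun {c} => Filter.Eventually.of_forall hf0
  -- tail bound: obtain b with ∫_{Ioi b} f ≤ 1/2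
  obtain ⟨b, hb0, hbtail⟩ : ∃ b : ℝ, 0 ≤ b ∧ ∫ t in Ioi b, f t ≤ 1/2 := by
    have htd := intervalIntegral_tendsto_integral_Ioi 0 hf (Filter.tendsto_id (α := ℝ))
    set I := ∫ t in Ioi (0:ℝ), f t with hI
    have hev : ∀ᶠ b : ℝ in Filter.atTop, I - 1/2 ≤ ∫ x in (0:ℝ)..b, f x :=
      htd.eventually (eventually_ge_nhds (by linarith))
    obtain ⟨b, hb1, hb2⟩ := (hev.and (Filter.eventually_ge_atTop 0)).exists
    refine ⟨b, hb2, ?_⟩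
    have hsplit : I = (∫ t in Ioc 0 b, f t) + ∫ t in Ioi b, f t := by
      rw [hI, ← setIntegral_union (Ioc_disjoint_Ioi le_rfl) measurableSet_Ioi
        (hf.mono_set Ioc_subset_Ioi_self) (hf.mono_set (Ioi_subset_Ioi hb2)),
        Ioc_union_Ioi_eq_Ioi hb2]
    rw [intervalIntegral.integral_of_le hb2] at hb1
    linarith
  -- base case: v vanishes on [b, ∞)
  have hbase : ∀ r, b ≤ r → v r = 0 := by
    refine sup_half v M b hv0 hvM hb0 (fun r₀ hr₀ => ?_)
    set S := sSup (v '' Ici b) with hSdef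
    have hr₀0 : (0:ℝ) ≤ r₀ := le_trans hb0 hr₀
    have hbdd : BddAbove (v '' Ici b) := by
      refine ⟨M, ?_⟩; rintro x ⟨r, hr, rfl⟩; exact hvM r (le_trans hb0 hr)
    have hS0 : 0 ≤ S := le_trans (hv0 b) (le_csSup hbdd ⟨b, self_mem_Ici, rfl⟩)
    have hfvi := fv_int f v M r₀ hr₀0 hf hf0 hv hv0 hvM
    have hfr₀ : IntegrableOn f (Ioi r₀) := hf.mono_set (Ioi_subset_Ioi hr₀0)
    calc v r₀ ≤ ∫ t in Ioi r₀, f t * v t := key r₀ hr₀0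
      _ ≤ ∫ t in Ioi r₀, f t * S := by
          refine setIntegral_mono_on hfvi (hfr₀.mul_const S) measurableSet_Ioi
            (fun t ht => ?_)
          exact mul_le_mul_of_nonneg_left
            (le_csSup hbdd ⟨t, le_trans hr₀ ht.le, rfl⟩) (hf0 t)
      _ = (∫ t in Ioi r₀, f t) * S := by rw [integral_mul_const]
      _ ≤ (∫ t in Ioi b, f t) * S := by
          refine mul_le_mul_of_nonneg_right
            (setIntegral_mono_set (hf.mono_set (Ioi_subset_Ioi hb0)) hf0ae
              (HasSubset.Subset.eventuallyLE (Ioi_subset_Ioi hr₀))) hS0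
      _ ≤ (1/2) * S := mul_le_mul_of_nonneg_right hbtail hS0
      _ = S / 2 := by ring
  -- uniform small step δ
  obtain ⟨C, hC⟩ := isCompact_Icc.exists_bound_of_continuousOn
    (hfcont.mono (Icc_subset_Ici_self : Icc (0:ℝ) b ⊆ Ici 0))
  have hC0 : 0 ≤ C := le_trans (norm_nonneg _) (hC 0 ⟨le_rfl, hb0⟩)
  set δ : ℝ := 1 / (2 * (C + 1)) with hδdef
  have hδpos : 0 < δ := by positivity
  have hstep : ∀ a a' : ℝ, 0 ≤ a → a ≤ a' → a' ≤ b → a' - a ≤ δ →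
      ∫ t in Ioc a a', f t ≤ 1/2 := by
    intro a a' ha haa' ha'b hlen
    have hsub : Ioc a a' ⊆ Ioi 0 := fun t ht => lt_of_le_of_lt ha ht.1
    calc ∫ t in Ioc a a', f t ≤ ∫ _ in Ioc a a', C := by
          refine setIntegral_mono_on (hf.mono_set hsub)
            (integrableOn_const (by simp [Real.volume_Ioc]))
            measurableSet_Ioc (fun t ht => ?_)
          exact le_trans (le_abs_self _) (hC t ⟨le_trans ha ht.1.le, le_trans ht.2 ha'b⟩)
      _ = (a' - a) * C := by
          rw [setIntegral_const, Real.volume_real_Ioc, max_eq_left (by linarith),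
            smul_eq_mul]
      _ ≤ δ * C := mul_le_mul_of_nonneg_right hlen hC0
      _ ≤ 1/2 := by
          rw [hδdef]
          rw [div_mul_eq_mul_div, one_mul, div_le_div_iff₀ (by positivity) (by norm_num)]
          nlinarith
  -- descent
  have hdescent : ∀ a b' : ℝ, 0 ≤ a → a ≤ b' → b' ≤ b →
      (∀ r, b' ≤ r → v r = 0) → (∫ t in Ioc a b', f t ≤ 1/2) →
      ∀ r, a ≤ r → v r = 0 := by
    intro a b' ha hab' hb'b hzero hint
    refine sup_half v M a hv0 hvM ha (fun r₀ hr₀ => ?_)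
    set S := sSup (v '' Ici a) with hSdef
    have hbdd : BddAbove (v '' Ici a) := by
      refine ⟨M, ?_⟩; rintro x ⟨r, hr, rfl⟩; exact hvM r (le_trans ha hr)
    have hS0 : 0 ≤ S := le_trans (hv0 a) (le_csSup hbdd ⟨a, self_mem_Ici, rfl⟩)
    have hr₀0 : (0:ℝ) ≤ r₀ := le_trans ha hr₀
    rcases le_or_gt r₀ b' with hcase | hcase
    · have hfvi := fv_int f v M r₀ hr₀0 hf hf0 hv hv0 hvM
      have hsplit : (∫ t in Ioi r₀, f t * v t)
          = (∫ t in Ioc r₀ b', f t * v t) + ∫ t in Ioi b', f t * v t := by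
        rw [← setIntegral_union (Ioc_disjoint_Ioi le_rfl) measurableSet_Ioi
          (hfvi.mono_set Ioc_subset_Ioi_self)
          (hfvi.mono_set (Ioi_subset_Ioi hcase)), Ioc_union_Ioi_eq_Ioi hcase]
      have hzero2 : (∫ t in Ioi b', f t * v t) = 0 := by
        rw [setIntegral_congr_fun measurableSet_Ioi
          (fun t ht => by rw [hzero t (le_of_lt ht), mul_zero]) (g := fun _ => (0:ℝ))]
        simp
      have hIoc : IntegrableOn (fun t => f t * v t) (Ioc r₀ b') :=
        hfvi.mono_set Ioc_subset_Ioi_self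
      have hfIoc : IntegrableOn f (Ioc r₀ b') :=
        (hf.mono_set (Ioi_subset_Ioi hr₀0)).mono_set Ioc_subset_Ioi_self
      calc v r₀ ≤ ∫ t in Ioi r₀, f t * v t := key r₀ hr₀0
        _ = (∫ t in Ioc r₀ b', f t * v t) := by rw [hsplit, hzero2, add_zero]
        _ ≤ ∫ t in Ioc r₀ b', f t * S := by
            refine setIntegral_mono_on hIoc (hfIoc.mul_const S) measurableSet_Ioc
              (fun t ht => ?_)
            exact mul_le_mul_of_nonneg_left
              (le_csSup hbdd ⟨t, le_trans hr₀ ht.1.le, rfl⟩) (hf0 t)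
        _ = (∫ t in Ioc r₀ b', f t) * S := by rw [integral_mul_const]
        _ ≤ (∫ t in Ioc a b', f t) * S := by
            refine mul_le_mul_of_nonneg_right
              (setIntegral_mono_set
                ((hf.mono_set (Ioi_subset_Ioi ha)).mono_set Ioc_subset_Ioi_self)
                (Filter.Eventually.of_forall hf0)
                (HasSubset.Subset.eventuallyLE (Ioc_subset_Ioc_left hr₀))) hS0
        _ ≤ (1/2) * S := mul_le_mul_of_nonneg_right hint hS0
        _ = S / 2 := by ring
    · rw [hzero r₀ hcase.le]; linarith
  -- downward induction
  have hind : ∀ n : ℕ, ∀ r, 0 ≤ r → b - n * δ ≤ r → v r = 0 := by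
    intro n
    induction n with
    | zero => intro r hr0 hrb; exact hbase r (by simpa using hrb)
    | succ n ih =>
      set a : ℝ := max (b - (n+1) * δ) 0 with hadef
      set b' : ℝ := max (b - n * δ) 0 with hb'def
      have hab' : a ≤ b' := max_le_max (by push_cast; nlinarith [hδpos.le]) le_rfl
      have hb'b : b' ≤ b := max_le (by nlinarith [hδpos.le]) hb0
      have hzero : ∀ r, b' ≤ r → v r = 0 := fun r hr =>
        ih r (le_trans (le_max_right _ _) hr) (le_trans (le_max_left _ _) hr)
      have hlen : b' - a ≤ δ := by
        rcases le_total (b - (n+1) * δ) 0 with h | h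
        · rcases le_total (b - n * δ) 0 with h2 | h2
          · simp [hadef, hb'def, max_eq_right h, max_eq_right h2, hδpos.le]
          · rw [hadef, hb'def, max_eq_right h, max_eq_left h2]; push_cast; linarith
        · rw [hadef, hb'def, max_eq_left h, max_eq_left (by push_cast at h ⊢; nlinarith [hδpos.le])]
          push_cast; linarith
      have hvanish := hdescent a b' (le_max_right _ _) hab' hb'b hzero
        (hstep a b' (le_max_right _ _) hab' hb'b hlen)
      intro r hr0 hrb
      exact hvanish r (max_le (by push_cast at hrb ⊢; linarith) hr0)
  intro r hr0
  obtain ⟨n, hn⟩ := exists_nat_ge (b / δ)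
  refine hind n r hr0 ?_
  have : b ≤ n * δ := by
    rw [div_le_iff₀ hδpos] at hn; linarith
  linarith

lemma shift_Ioi (g : ℝ → ℝ) (c : ℝ) :
    ∫ t in Ioi c, g t = ∫ r in Ioi (0:ℝ), g (c + r) := by
  have h := (measurePreserving_add_left (volume : Measure ℝ) c).setIntegral_preimage_emb
    (measurableEmbedding_addLeft c) g (Ioi c)
  rw [← h]
  congr 1
  ext x; simp

lemma shift_int (g : ℝ → ℝ) (c : ℝ) (hg : IntegrableOn g (Ioi c)) :
    IntegrableOn (fun r => g (c + r)) (Ioi 0) := by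
  have hpre : (fun x : ℝ => c + x) ⁻¹' (Ioi c) = Ioi 0 := by
    ext x; simp
  have hmp := ((measurePreserving_add_left (volume : Measure ℝ) c).restrict_preimage
      (measurableSet_Ioi (a := c)))
  rw [hpre] at hmp
  exact hmp.integrable_comp_emb (measurableEmbedding_addLeft c) |>.2 hg

/-- Uniqueness of bounded continuous solutions of the singular Volterra
integral equation along a horizontal ray. -/
theorem volterra_uniqueness (z : ℂ) (F w W w₀ : ℂ → ℂ)
    (hFcont : ContinuousOn (fun r : ℝ => F (z + r)) (Ici 0))
    (hFint : IntegrableOn (fun r : ℝ => ‖F (z + r)‖) (Ioi 0))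
    (hwcont : ContinuousOn (fun r : ℝ => w (z + r)) (Ici 0))
    (hWcont : ContinuousOn (fun r : ℝ => W (z + r)) (Ici 0))
    (hwbdd : ∃ M, ∀ r : ℝ, 0 ≤ r → ‖w (z + r)‖ ≤ M)
    (hWbdd : ∃ M, ∀ r : ℝ, 0 ≤ r → ‖W (z + r)‖ ≤ M)
    (hw : ∀ r₀ : ℝ, 0 ≤ r₀ → w (z + r₀) = w₀ (z + r₀)
      + ∫ r in Ioi (0 : ℝ), Complex.sin r * F (z + r₀ + r) * w (z + r₀ + r))
    (hW : ∀ r₀ : ℝ, 0 ≤ r₀ → W (z + r₀) = w₀ (z + r₀)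
      + ∫ r in Ioi (0 : ℝ), Complex.sin r * F (z + r₀ + r) * W (z + r₀ + r)) :
    ∀ r : ℝ, 0 ≤ r → w (z + r) = W (z + r) := by
  obtain ⟨Mw, hMw⟩ := hwbdd
  obtain ⟨MW, hMW⟩ := hWbdd
  set f : ℝ → ℝ := fun r => ‖F (z + r)‖ with hfdef
  set v : ℝ → ℝ := fun r => ‖w (z + r) - W (z + r)‖ with hvdef
  have hf0 : ∀ r, 0 ≤ f r := fun r => norm_nonneg _
  have hv0 : ∀ r, 0 ≤ v r := fun r => norm_nonneg _
  have hvM : ∀ r, 0 ≤ r → v r ≤ Mw + MW := by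
    intro r hr
    calc v r = ‖w (z + r) - W (z + r)‖ := rfl
      _ ≤ ‖w (z + r)‖ + ‖W (z + r)‖ := norm_sub_le _ _
      _ ≤ Mw + MW := add_le_add (hMw r hr) (hMW r hr)
  have hvcont : ContinuousOn v (Ici 0) :=
    continuous_norm.comp_continuousOn (hwcont.sub hWcont)
  have hfcont : ContinuousOn f (Ici 0) :=
    continuous_norm.comp_continuousOn hFcont
  -- key inequality
  have key : ∀ r₀, 0 ≤ r₀ → v r₀ ≤ ∫ t in Ioi r₀, f t * v t := by
    intro r₀ hr₀
    have hc : ∀ r : ℝ, z + (r₀:ℂ) + (r:ℂ) = z + ((r₀ + r : ℝ):ℂ) := by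
      intro r; push_cast; ring
    have hshift : ContinuousOn (fun r : ℝ => r₀ + r) (Ici 0) :=
      (continuous_const.add continuous_id).continuousOn
    have hmaps : MapsTo (fun r : ℝ => r₀ + r) (Ici 0) (Ici 0) :=
      fun r hr => add_nonneg hr₀ hr
    have hfshift_int : IntegrableOn (fun r => f (r₀ + r)) (Ioi 0) :=
      shift_int f r₀ (hFint.mono_set (Ioi_subset_Ioi hr₀))
    have hsin1 : ∀ r : ℝ, ‖Complex.sin r‖ ≤ 1 := by
      intro r
      rw [← Complex.ofReal_sin, Complex.norm_real, Real.norm_eq_abs]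
      exact abs_le.2 ⟨Real.neg_one_le_sin r, Real.sin_le_one r⟩
    -- integrability of the two integrands
    have hint : ∀ (u : ℂ → ℂ) (Mu : ℝ), ContinuousOn (fun r : ℝ => u (z + r)) (Ici 0) →
        (∀ r : ℝ, 0 ≤ r → ‖u (z + r)‖ ≤ Mu) →
        IntegrableOn (fun r : ℝ => Complex.sin r * F (z + ((r₀ + r : ℝ):ℂ))
          * u (z + ((r₀ + r : ℝ):ℂ))) (Ioi 0) := by
      intro u Mu hucont huM
      refine ((hfshift_int.mul_const Mu).mono' ?_ ?_)
      · have hcont : ContinuousOn (fun r : ℝ => Complex.sin r * F (z + ((r₀ + r : ℝ):ℂ))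
            * u (z + ((r₀ + r : ℝ):ℂ))) (Ici 0) := by
          exact ((Complex.continuous_sin.comp Complex.continuous_ofReal).continuousOn.mul
            (hFcont.comp hshift hmaps)).mul (hucont.comp hshift hmaps)
        exact (hcont.mono (Ioi_subset_Ici le_rfl)).aestronglyMeasurable measurableSet_Ioi
      · filter_upwards [ae_restrict_mem measurableSet_Ioi] with r hr
        have hr0 : (0:ℝ) ≤ r₀ + r := add_nonneg hr₀ (le_of_lt hr)
        rw [norm_mul, norm_mul]
        calc ‖Complex.sin r‖ * ‖F (z + ((r₀ + r : ℝ):ℂ))‖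
              * ‖u (z + ((r₀ + r : ℝ):ℂ))‖
            ≤ 1 * ‖F (z + ((r₀ + r : ℝ):ℂ))‖ * Mu := by
              refine mul_le_mul (mul_le_mul_of_nonneg_right (hsin1 r)
                (norm_nonneg _)) (huM _ hr0) (norm_nonneg _) ?_
              positivity
          _ = f (r₀ + r) * Mu := by rw [one_mul]
    have hwint := hint w Mw hwcont hMw
    have hWint := hint W MW hWcont hMW
    have hw' := hw r₀ hr₀
    have hW' := hW r₀ hr₀
    simp only [hc] at hw' hW'
    have heq : w (z + (r₀:ℂ)) - W (z + (r₀:ℂ)) = ∫ r in Ioi (0:ℝ),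
        Complex.sin r * F (z + ((r₀ + r : ℝ):ℂ))
          * (w (z + ((r₀ + r : ℝ):ℂ)) - W (z + ((r₀ + r : ℝ):ℂ))) := by
      rw [hw', hW', add_sub_add_left_eq_sub, ← integral_sub hwint hWint]
      congr 1; ext r; ring
    have hfv_shift : IntegrableOn (fun r => f (r₀ + r) * v (r₀ + r)) (Ioi 0) := by
      have h1 : IntegrableOn (fun t => f t * v t) (Ioi r₀) := by
        refine ((hFint.mono_set (Ioi_subset_Ioi hr₀)).mul_const (Mw + MW)).mono' ?_ ?_
        · exact ((hFint.mono_set (Ioi_subset_Ioi hr₀)).aestronglyMeasurable.mul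
            ((hvcont.mono (Ioi_subset_Ici hr₀)).aestronglyMeasurable measurableSet_Ioi))
        · filter_upwards [ae_restrict_mem measurableSet_Ioi] with t ht
          have h0t : (0:ℝ) ≤ t := le_of_lt (lt_of_le_of_lt hr₀ ht)
          rw [Real.norm_eq_abs, abs_of_nonneg (mul_nonneg (hf0 t) (hv0 t))]
          exact mul_le_mul_of_nonneg_left (hvM t h0t) (hf0 t)
      exact shift_int (fun t => f t * v t) r₀ h1
    calc v r₀ = ‖w (z + (r₀:ℂ)) - W (z + (r₀:ℂ))‖ := rfl
      _ = ‖∫ r in Ioi (0:ℝ), Complex.sin r * F (z + ((r₀ + r : ℝ):ℂ))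
            * (w (z + ((r₀ + r : ℝ):ℂ)) - W (z + ((r₀ + r : ℝ):ℂ)))‖ := by rw [heq]
      _ ≤ ∫ r in Ioi (0:ℝ), f (r₀ + r) * v (r₀ + r) := by
          refine norm_integral_le_of_norm_le hfv_shift ?_
          filter_upwards [ae_restrict_mem measurableSet_Ioi] with r hr
          rw [norm_mul, norm_mul]
          calc ‖Complex.sin r‖ * ‖F (z + ((r₀ + r : ℝ):ℂ))‖
                * ‖w (z + ((r₀ + r : ℝ):ℂ)) - W (z + ((r₀ + r : ℝ):ℂ))‖
              ≤ 1 * ‖F (z + ((r₀ + r : ℝ):ℂ))‖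
                * ‖w (z + ((r₀ + r : ℝ):ℂ)) - W (z + ((r₀ + r : ℝ):ℂ))‖ := by
                refine mul_le_mul_of_nonneg_right (mul_le_mul_of_nonneg_right (hsin1 r)
                  (norm_nonneg _)) (norm_nonneg _)
            _ = f (r₀ + r) * v (r₀ + r) := by rw [one_mul]
      _ = ∫ t in Ioi r₀, f t * v t := (shift_Ioi (fun t => f t * v t) r₀).symm
  have hz := aux_vanish f v (Mw + MW) hFint hf0 hfcont hvcont hv0 hvM key
  intro r hr
  have h0 : ‖w (z + r) - W (z + r)‖ = 0 := hz r hr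
  exact sub_eq_zero.mp (norm_eq_zero.mp h0)
end
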